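/- arXiv:1403.0680 — 4 statements merged into one kernel-verified Lean document; each statement's English description precedes it below -/
import Mathlib

section
/- Let k ≥ 3 be an integer, let l be any integer, and let s be an integer with 1 ≤ s ≤ k−1. Then the image under η of the kernel of η_s equals the subgroup gcd(s, k−s)·ℤ of ℤ; that is, { η(α) : α ∈ ℤ^k, η_s(α) = 0 } = gcd(s, k−s)·ℤ. -/
/-- `modK k i` is reduction of `i` modulo `k` taking values in `{1, …, k}`:
integers divisible by `k` are sent to `k` rather than `0`. -/
def modK (k : ℕ) (i : ℤ) : ℤ := (i - 1) % (k : ℤ) + 1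

/-- `eta k l α = Σ_{i=1}^k (l + mod_k(i)) · α_i` on `ℤ^k = (Fin k → ℤ)`,
where the `i`-th standard basis vector corresponds to the index `i ∈ {1, …, k}`. -/
def eta (k : ℕ) (l : ℤ) (α : Fin k → ℤ) : ℤ :=
  ∑ i : Fin k, (l + modK k ((i : ℤ) + 1)) * α i

/-- `etaS k l s α = Σ_{i=1}^k (l + mod_k(i + s)) · α_i`. -/
def etaS (k : ℕ) (l s : ℤ) (α : Fin k → ℤ) : ℤ :=
  ∑ i : Fin k, (l + modK k ((i : ℤ) + 1 + s)) * α i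

lemma modK_succ (k : ℕ) (a : ℤ) : modK k (a + 1) = a % k + 1 := by
  simp [modK]

lemma emod_helper (k : ℕ) (a b : ℤ) (h : a = b + k ∨ a = b) (hb0 : 0 ≤ b)
    (hbk : b < k) : a % (k : ℤ) = b := by
  rcases h with h | h
  · have : a = b + (k : ℤ) * 1 := by omega
    rw [this, Int.add_mul_emod_self_left, Int.emod_eq_of_lt hb0 hbk]
  · rw [h, Int.emod_eq_of_lt hb0 hbk]

lemma modK_eq (k : ℕ) (a b : ℤ) (h : a = b + k ∨ a = b) (hb0 : 1 ≤ b)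
    (hbk : b ≤ k) : modK k a = b := by
  rw [modK, emod_helper k (a - 1) (b - 1) (by omega) (by omega) (by omega)]
  ring

lemma sum_mul_single (k : ℕ) (c : Fin k → ℤ) (j : Fin k) (x : ℤ) :
    ∑ i : Fin k, c i * ((Pi.single j x : Fin k → ℤ) i) = c j * x := by
  rw [Finset.sum_eq_single j]
  · simp
  · intro b _ hb; simp [Pi.single_apply, hb]
  · simp

lemma eta_single (k : ℕ) (l : ℤ) (j : Fin k) (x : ℤ) :
    eta k l (Pi.single j x) = (l + modK k ((j : ℤ) + 1)) * x :=
  sum_mul_single k _ j x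

lemma etaS_single (k : ℕ) (l s : ℤ) (j : Fin k) (x : ℤ) :
    etaS k l s (Pi.single j x) = (l + modK k ((j : ℤ) + 1 + s)) * x :=
  sum_mul_single k _ j x

lemma eta_add (k : ℕ) (l : ℤ) (α β : Fin k → ℤ) :
    eta k l (α + β) = eta k l α + eta k l β := by
  simp [eta, mul_add, Finset.sum_add_distrib]

lemma etaS_add (k : ℕ) (l s : ℤ) (α β : Fin k → ℤ) :
    etaS k l s (α + β) = etaS k l s α + etaS k l s β := by
  simp [etaS, mul_add, Finset.sum_add_distrib]

lemma eta_smul (k : ℕ) (l u : ℤ) (α : Fin k → ℤ) :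
    eta k l (u • α) = u * eta k l α := by
  simp only [eta, Pi.smul_apply, smul_eq_mul, Finset.mul_sum]
  exact Finset.sum_congr rfl fun i _ => by ring

lemma etaS_smul (k : ℕ) (l s u : ℤ) (α : Fin k → ℤ) :
    etaS k l s (u • α) = u * etaS k l s α := by
  simp only [etaS, Pi.smul_apply, smul_eq_mul, Finset.mul_sum]
  exact Finset.sum_congr rfl fun i _ => by ring

/-- The Claim in Mashiko's proof: for `k ≥ 3`, any `l`, and `1 ≤ s ≤ k − 1`,
the image under `η` of the kernel of `η_s` is exactly `gcd(s, k−s) · ℤ`. -/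
theorem eta_image_ker_etaS (k : ℕ) (hk : 3 ≤ k) (l s : ℤ)
    (hs1 : 1 ≤ s) (hs2 : s ≤ (k : ℤ) - 1) :
    {x : ℤ | ∃ α : Fin k → ℤ, etaS k l s α = 0 ∧ eta k l α = x}
      = {x : ℤ | (Int.gcd s ((k : ℤ) - s) : ℤ) ∣ x} := by
  have hk' : (3 : ℤ) ≤ (k : ℤ) := by exact_mod_cast hk
  set g : ℤ := (Int.gcd s ((k : ℤ) - s) : ℤ) with hg
  have hgs : g ∣ s := Int.gcd_dvd_left s ((k : ℤ) - s)
  have hgks : g ∣ ((k : ℤ) - s) := Int.gcd_dvd_right s ((k : ℤ) - s)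
  have hgk : g ∣ (k : ℤ) := by
    have := dvd_add hgs hgks; simpa using this
  -- building block 1 : when s ≤ k - 2, an element of the kernel with η = -s
  have build1 : s ≤ (k : ℤ) - 2 → ∃ α : Fin k → ℤ,
      etaS k l s α = 0 ∧ eta k l α = -s := by
    intro hA
    set i0 : Fin k := ⟨0, by omega⟩
    set i1 : Fin k := ⟨1, by omega⟩
    have hi0 : (i0 : ℤ) = 0 := rfl
    have hi1 : (i1 : ℤ) = 1 := rfl
    refine ⟨Pi.single i0 (l + 2 + s) + Pi.single i1 (-(l + 1 + s)), ?_, ?_⟩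
    · rw [etaS_add, etaS_single, etaS_single, hi0, hi1]
      rw [modK_eq k ((0 : ℤ) + 1 + s) (s + 1) (Or.inr (by ring)) (by omega) (by omega)]
      rw [modK_eq k ((1 : ℤ) + 1 + s) (s + 2) (Or.inr (by ring)) (by omega) (by omega)]
      ring
    · rw [eta_add, eta_single, eta_single, hi0, hi1]
      rw [modK_eq k ((0 : ℤ) + 1) 1 (Or.inr (by ring)) (by omega) (by omega)]
      rw [modK_eq k ((1 : ℤ) + 1) 2 (Or.inr (by ring)) (by omega) (by omega)]
      ring
  -- building block 2 : when 2 ≤ s, an element of the kernel with η = k - s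
  have build2 : 2 ≤ s → ∃ α : Fin k → ℤ,
      etaS k l s α = 0 ∧ eta k l α = (k : ℤ) - s := by
    intro hB
    set q : ℕ := k - s.toNat with hq
    have hqk : q + 1 < k := by omega
    set iq : Fin k := ⟨q, by omega⟩
    set iq1 : Fin k := ⟨q + 1, by omega⟩
    have hiq : (iq : ℤ) = (k : ℤ) - s := by
      show ((q : ℕ) : ℤ) = (k : ℤ) - s
      omega
    have hiq1 : (iq1 : ℤ) = (k : ℤ) - s + 1 := by
      show (((q + 1 : ℕ)) : ℤ) = (k : ℤ) - s + 1
      omega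
    refine ⟨Pi.single iq (l + 2) + Pi.single iq1 (-(l + 1)), ?_, ?_⟩
    · rw [etaS_add, etaS_single, etaS_single, hiq, hiq1]
      rw [modK_eq k ((k : ℤ) - s + 1 + s) 1 (Or.inl (by ring)) (by omega) (by omega)]
      rw [modK_eq k ((k : ℤ) - s + 1 + 1 + s) 2 (Or.inl (by ring)) (by omega) (by omega)]
      ring
    · rw [eta_add, eta_single, eta_single, hiq, hiq1]
      rw [modK_eq k ((k : ℤ) - s + 1) ((k : ℤ) - s + 1) (Or.inr rfl) (by omega) (by omega)]
      rw [modK_eq k ((k : ℤ) - s + 1 + 1) ((k : ℤ) - s + 2) (Or.inr (by ring)) (by omega) (by omega)]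
      ring
  ext x
  simp only [Set.mem_setOf_eq]
  constructor
  · rintro ⟨α, h0, rfl⟩
    have key : eta k l α
        = ∑ i : Fin k, (modK k ((i : ℤ) + 1) - modK k ((i : ℤ) + 1 + s)) * α i := by
      calc eta k l α = eta k l α - etaS k l s α := by rw [h0]; ring
        _ = _ := by
            rw [eta, etaS, ← Finset.sum_sub_distrib]
            exact Finset.sum_congr rfl fun i _ => by ring
    rw [key]
    refine Finset.dvd_sum fun i _ => Dvd.dvd.mul_right ?_ _
    have h1 : modK k ((i : ℤ) + 1) = (i : ℤ) % k + 1 := modK_succ k _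
    have h2 : modK k ((i : ℤ) + 1 + s) = ((i : ℤ) + s) % k + 1 := by
      have h3 : (i : ℤ) + 1 + s = ((i : ℤ) + s) + 1 := by ring
      rw [h3, modK_succ]
    rw [h1, h2]
    have hrw : (i : ℤ) % k + 1 - (((i : ℤ) + s) % k + 1)
        = -s + (k : ℤ) * (((i : ℤ) + s) / k - (i : ℤ) / k) := by
      rw [Int.emod_def, Int.emod_def]; ring
    rw [hrw]
    exact dvd_add (dvd_neg.mpr hgs) (hgk.mul_right _)
  · rintro ⟨m, rfl⟩
    by_cases hB : 2 ≤ s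
    · by_cases hA : s ≤ (k : ℤ) - 2
      · obtain ⟨α₁, hα₁0, hα₁⟩ := build1 hA
        obtain ⟨α₂, hα₂0, hα₂⟩ := build2 hB
        have hbez := Int.gcd_eq_gcd_ab s ((k : ℤ) - s)
        refine ⟨(-(m * Int.gcdA s ((k : ℤ) - s))) • α₁
          + (m * Int.gcdB s ((k : ℤ) - s)) • α₂, ?_, ?_⟩
        · rw [etaS_add, etaS_smul, etaS_smul, hα₁0, hα₂0]; ring
        · rw [eta_add, eta_smul, eta_smul, hα₁, hα₂, hg, hbez]; ring
      · -- s = k - 1, so k - s = 1 and g = 1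
        obtain ⟨α₂, hα₂0, hα₂⟩ := build2 hB
        have hks1 : (k : ℤ) - s = 1 := by omega
        have hg1 : g = 1 := by
          rw [hg, hks1]
          simp [Int.gcd]
        refine ⟨(g * m) • α₂, ?_, ?_⟩
        · rw [etaS_smul, hα₂0]; ring
        · rw [eta_smul, hα₂, hks1, hg1]; ring
    · -- s = 1, g = 1
      obtain ⟨α₁, hα₁0, hα₁⟩ := build1 (by omega)
      have hs' : s = 1 := by omega
      have hg1 : g = 1 := by
        rw [hg, hs']
        simp [Int.gcd]
      refine ⟨(-(g * m)) • α₁, ?_, ?_⟩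
      · rw [etaS_smul, hα₁0]; ring
      · rw [eta_smul, hα₁, hs', hg1]; ring
end

section
/- Let k ≥ 2 be an integer, let l be any integer, and let s be an integer with 1 ≤ s ≤ k−1. Then for every α ∈ ℤ^k with η_s(α) = 0, the integer gcd(s, k−s) divides η(α); equivalently, the image η(ker η_s) is contained in the subgroup gcd(s, k−s)·ℤ of ℤ. -/
/-- The inclusion direction of the Claim in Mashiko's proof: for `k ≥ 2`, any `l`,
and `1 ≤ s ≤ k − 1`, if `η_s(α) = 0` then `gcd(s, k−s)` divides `η(α)`. -/
theorem gcd_dvd_eta_of_etaS_eq_zero (k : ℕ) (hk : 2 ≤ k) (l s : ℤ)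
    (hs1 : 1 ≤ s) (hs2 : s ≤ (k : ℤ) - 1) (α : Fin k → ℤ) (hα : etaS k l s α = 0) :
    (Int.gcd s ((k : ℤ) - s) : ℤ) ∣ eta k l α := by
  have hk0 : (0:ℤ) < (k:ℤ) := by exact_mod_cast Nat.lt_of_lt_of_le Nat.zero_lt_two hk
  set d : ℤ := (Int.gcd s ((k : ℤ) - s) : ℤ) with hd
  have hds : d ∣ s := Int.gcd_dvd_left s ((k:ℤ) - s)
  have hdk : d ∣ ((k:ℤ) - s) := Int.gcd_dvd_right s ((k:ℤ) - s)
  have key : ∀ x : ℤ, d ∣ (modK k x - modK k (x + s)) := by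
    intro x
    have hc : modK k x - modK k (x + s) = (x - 1) % k - (x + s - 1) % k := by
      simp [modK]
    set c : ℤ := (x - 1) % k - (x + s - 1) % k with hcdef
    have hdvd : (k:ℤ) ∣ (c + s) := by
      have e1 : (k:ℤ) ∣ (x - 1) - (x - 1) % k := Int.dvd_self_sub_of_emod_eq rfl
      have e2 : (k:ℤ) ∣ (x + s - 1) - (x + s - 1) % k := Int.dvd_self_sub_of_emod_eq rfl
      have heq : c + s = ((x + s - 1) - (x + s - 1) % k) - ((x - 1) - (x - 1) % k) := by
        rw [hcdef]; ring
      rw [heq]; exact dvd_sub e2 e1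
    have h1 : 0 ≤ (x - 1) % k := Int.emod_nonneg _ (by positivity)
    have h2 : (x - 1) % k < k := Int.emod_lt_of_pos _ hk0
    have h3 : 0 ≤ (x + s - 1) % k := Int.emod_nonneg _ (by positivity)
    have h4 : (x + s - 1) % k < k := Int.emod_lt_of_pos _ hk0
    have hb1 : -(k:ℤ) < c + s := by omega
    have hb2 : c + s < 2 * k := by omega
    obtain ⟨m, hm⟩ := hdvd
    have hm01 : m = 0 ∨ m = 1 := by
      rcases lt_trichotomy m 0 with h | h | h
      · exfalso; nlinarith
      · left; exact h
      · rcases lt_or_ge m 2 with h' | h'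
        · right; omega
        · exfalso; nlinarith
    have : c = -s ∨ c = (k:ℤ) - s := by
      rcases hm01 with h | h <;> subst h <;> simp at hm <;> omega
    rw [hc]
    rcases this with h | h
    · rw [h]; exact dvd_neg.mpr hds
    · rw [h]; exact hdk
  have hsum : eta k l α - etaS k l s α
      = ∑ i : Fin k, (modK k ((i : ℤ) + 1) - modK k ((i : ℤ) + 1 + s)) * α i := by
    rw [eta, etaS, ← Finset.sum_sub_distrib]
    exact Finset.sum_congr rfl fun i _ => by ring
  have : d ∣ eta k l α - etaS k l s α := by
    rw [hsum]
    exact Finset.dvd_sum fun i _ => Dvd.dvd.mul_right (key _) _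
  simpa [hα] using this
end

section
/- Let k ≥ 2 be an integer, let l be any integer, and let s be an integer with 1 ≤ s ≤ k−1. For an integer j with 1 ≤ j ≤ k−1 and j ≠ k−s, define β_j := (l + mod_k(j+s+1))·e_j − (l + mod_k(j+s))·e_{j+1} ∈ ℤ^k. Then η_s(β_j) = 0, and moreover η(β_j) = −s if j < k−s, while η(β_j) = k−s if j > k−s. -/
/-- `betaJ k l s j` is the element
`β_j = (l + mod_k(j+s+1))·e_j − (l + mod_k(j+s))·e_{j+1}` of `ℤ^k`,
where `e_j` is the `j`-th standard basis vector (`1`-based indexing, so the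
coordinate `i : Fin k` corresponds to the index `i + 1 ∈ {1, …, k}`). -/
def betaJ (k : ℕ) (l s : ℤ) (j : ℕ) : Fin k → ℤ := fun i =>
  if (i : ℕ) + 1 = j then l + modK k ((j : ℤ) + s + 1)
  else if (i : ℕ) + 1 = j + 1 then -(l + modK k ((j : ℤ) + s))
  else 0

lemma modK_eq_self {k : ℕ} {m : ℤ} (h1 : 1 ≤ m) (h2 : m ≤ k) : modK k m = m := by
  unfold modK
  rw [Int.emod_eq_of_lt (by omega) (by omega)]; omega

lemma modK_eq_sub {k : ℕ} {m : ℤ} (h1 : (k:ℤ) + 1 ≤ m) (h2 : m ≤ 2*k) : modK k m = m - k := by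
  unfold modK
  have : m - 1 = (m - 1 - k) + 1 * k := by ring
  rw [this, Int.add_mul_emod_self_right, Int.emod_eq_of_lt (by omega) (by omega)]; omega

lemma key_sum (k : ℕ) (l s : ℤ) (j : ℕ) (hj1 : 1 ≤ j) (hjk : j < k) (c : Fin k → ℤ) :
    ∑ i : Fin k, c i * betaJ k l s j i =
      c ⟨j - 1, by omega⟩ * (l + modK k ((j : ℤ) + s + 1))
      - c ⟨j, hjk⟩ * (l + modK k ((j : ℤ) + s)) := by
  set a : Fin k := ⟨j - 1, by omega⟩
  set b : Fin k := ⟨j, hjk⟩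
  have hab : a ≠ b := by simp [a, b, Fin.ext_iff]; omega
  rw [← Finset.sum_subset (Finset.subset_univ ({a, b} : Finset (Fin k)))]
  · rw [Finset.sum_pair hab]
    have ha : (a : ℕ) + 1 = j := by simp [a]; omega
    have hb : (b : ℕ) + 1 = j + 1 := rfl
    have e1 : betaJ k l s j a = l + modK k ((j:ℤ)+s+1) := by
      unfold betaJ; rw [ha, if_pos rfl]
    have e2 : betaJ k l s j b = -(l + modK k ((j:ℤ)+s)) := by
      unfold betaJ; rw [hb, if_neg (by omega), if_pos rfl]
    rw [e1, e2]; ring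
  · intro x _ hx
    simp only [Finset.mem_insert, Finset.mem_singleton] at hx
    push_neg at hx
    have h1 : (x : ℕ) + 1 ≠ j := by
      intro h; exact hx.1 (by apply Fin.ext; simp [a]; omega)
    have h2 : (x : ℕ) + 1 ≠ j + 1 := by
      intro h; exact hx.2 (by apply Fin.ext; simp [b]; omega)
    simp [betaJ, h1, h2, show (x : ℕ) ≠ j by omega]


/-- The elements `β_j` constructed in the proof of the Claim in Mashiko's paper:
for `k ≥ 2`, any `l`, `1 ≤ s ≤ k − 1`, and `1 ≤ j ≤ k − 1` with `j ≠ k − s`,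
one has `η_s(β_j) = 0`; moreover `η(β_j) = −s` if `j < k − s` and
`η(β_j) = k − s` if `j > k − s`. -/
theorem etaS_betaJ_eq_zero_and_eta_betaJ (k : ℕ) (hk : 2 ≤ k) (l s : ℤ)
    (hs1 : 1 ≤ s) (hs2 : s ≤ (k : ℤ) - 1) (j : ℕ) (hj1 : 1 ≤ j) (hj2 : j ≤ k - 1)
    (hjs : (j : ℤ) ≠ (k : ℤ) - s) :
    etaS k l s (betaJ k l s j) = 0 ∧
    ((j : ℤ) < (k : ℤ) - s → eta k l (betaJ k l s j) = -s) ∧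
    ((k : ℤ) - s < (j : ℤ) → eta k l (betaJ k l s j) = (k : ℤ) - s) := by
  have hjk : j < k := by omega
  have hcast : ((⟨j - 1, by omega⟩ : Fin k) : ℤ) = (j : ℤ) - 1 := by
    simp; omega
  have hcastb : ((⟨j, hjk⟩ : Fin k) : ℤ) = (j : ℤ) := rfl
  refine ⟨?_, ?_, ?_⟩
  · unfold etaS
    rw [key_sum k l s j hj1 hjk]
    rw [hcast, hcastb]
    have : (j:ℤ) - 1 + 1 + s = (j:ℤ) + s := by ring
    rw [this]
    ring
  · intro hlt
    unfold eta
    rw [key_sum k l s j hj1 hjk, hcast, hcastb]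
    have h1 : modK k ((j:ℤ) - 1 + 1) = (j:ℤ) := by
      rw [show (j:ℤ) - 1 + 1 = (j:ℤ) by ring]; exact modK_eq_self (by omega) (by omega)
    have h2 : modK k ((j:ℤ) + 1) = (j:ℤ) + 1 := modK_eq_self (by omega) (by omega)
    have h3 : modK k ((j:ℤ) + s + 1) = (j:ℤ) + s + 1 := modK_eq_self (by omega) (by omega)
    have h4 : modK k ((j:ℤ) + s) = (j:ℤ) + s := modK_eq_self (by omega) (by omega)
    rw [h1, h2, h3, h4]; ring
  · intro hgt
    unfold eta
    rw [key_sum k l s j hj1 hjk, hcast, hcastb]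
    have hjk' : (j:ℤ) ≤ (k:ℤ) - 1 := by
      have := hj2; omega
    have h1 : modK k ((j:ℤ) - 1 + 1) = (j:ℤ) := by
      rw [show (j:ℤ) - 1 + 1 = (j:ℤ) by ring]; exact modK_eq_self (by omega) (by omega)
    have h2 : modK k ((j:ℤ) + 1) = (j:ℤ) + 1 := modK_eq_self (by omega) (by omega)
    have h3 : modK k ((j:ℤ) + s + 1) = (j:ℤ) + s + 1 - k := modK_eq_sub (by omega) (by omega)
    have h4 : modK k ((j:ℤ) + s) = (j:ℤ) + s - k := modK_eq_sub (by omega) (by omega)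
    rw [h1, h2, h3, h4]; ring
end

section
/- Let n ≥ 3 be an integer and set k = n!. Let l be any integer, and let s be an integer with 1 ≤ s ≤ n. Then the image under η of the kernel of η_s equals the subgroup s·ℤ of ℤ; that is, { η(α) : α ∈ ℤ^k, η_s(α) = 0 } = s·ℤ. In particular, for distinct s, s' ∈ {1, …, n}, the subgroups η(ker η_s) and η(ker η_{s'}) of ℤ are distinct. -/
lemma sum_pair_aux {k : ℕ} (i0 i1 : Fin k) (h : i0 ≠ i1) (g : Fin k → ℤ) (a b : ℤ) :
    ∑ i : Fin k, g i * (if i = i0 then a else if i = i1 then b else 0)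
      = g i0 * a + g i1 * b := by
  have hsplit : ∀ i : Fin k,
      g i * (if i = i0 then a else if i = i1 then b else 0)
        = (if i = i0 then g i0 * a else 0) + (if i = i1 then g i1 * b else 0) := by
    intro i
    by_cases h0 : i = i0
    · subst h0
      simp [if_neg h]
    · by_cases h1 : i = i1
      · subst h1
        simp [h0]
      · simp [h0, h1]
  simp only [hsplit]
  rw [Finset.sum_add_distrib]
  simp [Finset.sum_ite_eq']

/-- The specialization `k = n!` of the Claim used in the proof of Mashiko's
Theorem 1.3: for `n ≥ 3`, `k = n!`, any `l`, and `1 ≤ s ≤ n`, the image under `η`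
of the kernel of `η_s` is exactly `s · ℤ`; in particular for distinct
`s, s' ∈ {1, …, n}` these images are distinct subgroups of `ℤ`. -/
theorem eta_image_ker_etaS_factorial (n : ℕ) (hn : 3 ≤ n) (l : ℤ) :
    (∀ s : ℤ, 1 ≤ s → s ≤ (n : ℤ) →
      {x : ℤ | ∃ α : Fin (Nat.factorial n) → ℤ,
          etaS (Nat.factorial n) l s α = 0 ∧ eta (Nat.factorial n) l α = x}
        = {x : ℤ | s ∣ x}) ∧
    (∀ s s' : ℤ, 1 ≤ s → s ≤ (n : ℤ) → 1 ≤ s' → s' ≤ (n : ℤ) → s ≠ s' →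
      {x : ℤ | ∃ α : Fin (Nat.factorial n) → ℤ,
          etaS (Nat.factorial n) l s α = 0 ∧ eta (Nat.factorial n) l α = x}
        ≠ {x : ℤ | ∃ α : Fin (Nat.factorial n) → ℤ,
          etaS (Nat.factorial n) l s' α = 0 ∧ eta (Nat.factorial n) l α = x}) := by
  set k := Nat.factorial n with hkdef
  have hk6 : 6 ≤ k := by
    have : Nat.factorial 3 ≤ k := Nat.factorial_le hn
    simpa [Nat.factorial] using this
  have hnk : n < k := Nat.lt_factorial_self hn
  have h2n : n * 2 ≤ k := by
    have hf2 : 2 ≤ (n - 1).factorial := by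
      have := Nat.factorial_le (show 2 ≤ n - 1 by omega)
      simpa [Nat.factorial] using this
    calc n * 2 ≤ n * (n - 1).factorial := Nat.mul_le_mul_left n hf2
      _ = k := by rw [hkdef, Nat.mul_factorial_pred (by omega)]
  have hmain : ∀ s : ℤ, 1 ≤ s → s ≤ (n : ℤ) →
      {x : ℤ | ∃ α : Fin k → ℤ, etaS k l s α = 0 ∧ eta k l α = x}
        = {x : ℤ | s ∣ x} := by
    intro s hs1 hsn
    have hsk : s ∣ (k : ℤ) := by
      have h1 : s.toNat ∣ k := by
        apply Nat.dvd_factorial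
        · omega
        · omega
      have : (s.toNat : ℤ) = s := Int.toNat_of_nonneg (by omega)
      exact this ▸ Int.natCast_dvd_natCast.mpr h1
    have hsklt : s + 1 < (k : ℤ) := by
      have h1 : (n : ℤ) * 2 ≤ (k : ℤ) := by exact_mod_cast h2n
      have h2 : (3 : ℤ) ≤ (n : ℤ) := by exact_mod_cast hn
      omega
    ext x
    simp only [Set.mem_setOf_eq]
    constructor
    · rintro ⟨α, h0, rfl⟩
      have heq : eta k l α = eta k l α - etaS k l s α := by rw [h0]; ring
      rw [heq, eta, etaS, ← Finset.sum_sub_distrib]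
      apply Finset.dvd_sum
      intro i _
      have hterm : (l + modK k ((i : ℤ) + 1)) * α i - (l + modK k ((i : ℤ) + 1 + s)) * α i
          = (modK k ((i : ℤ) + 1) - modK k ((i : ℤ) + 1 + s)) * α i := by ring
      rw [hterm]
      apply Dvd.dvd.mul_right
      obtain ⟨c, hc⟩ := hsk
      set a : ℤ := (i : ℤ) + 1 with ha
      have hd : modK k a - modK k (a + s)
          = s * (-1 + c * ((a + s - 1) / k - (a - 1) / k)) := by
        unfold modK
        rw [Int.emod_def, Int.emod_def, hc]
        ring
      exact ⟨_, hd⟩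
    · rintro ⟨m, rfl⟩
      set i0 : Fin k := ⟨0, by omega⟩ with hi0
      set i1 : Fin k := ⟨1, by omega⟩ with hi1
      have hne : i0 ≠ i1 := by
        intro h
        have := congrArg Fin.val h
        simp [hi0, hi1] at this
      refine ⟨fun i => if i = i0 then (-m) * (l + 2 + s) else if i = i1 then m * (l + 1 + s) else 0,
        ?_, ?_⟩
      · rw [etaS, sum_pair_aux i0 i1 hne]
        have v0 : ((i0 : Fin k) : ℤ) = 0 := by simp [hi0]
        have v1 : ((i1 : Fin k) : ℤ) = 1 := by simp [hi1]
        have e0 : modK k ((i0 : ℤ) + 1 + s) = 1 + s := by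
          rw [v0]; unfold modK
          rw [show (0:ℤ) + 1 + s - 1 = s by ring,
            Int.emod_eq_of_lt (by omega) (by omega)]
          ring
        have e1 : modK k ((i1 : ℤ) + 1 + s) = 2 + s := by
          rw [v1]; unfold modK
          rw [show (1:ℤ) + 1 + s - 1 = s + 1 by ring,
            Int.emod_eq_of_lt (by omega) (by omega)]
          ring
        rw [e0, e1]
        ring
      · rw [eta, sum_pair_aux i0 i1 hne]
        have v0 : ((i0 : Fin k) : ℤ) = 0 := by simp [hi0]
        have v1 : ((i1 : Fin k) : ℤ) = 1 := by simp [hi1]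
        have e0 : modK k ((i0 : ℤ) + 1) = 1 := by
          rw [v0]; unfold modK
          rw [show (0:ℤ) + 1 - 1 = 0 by ring]
          simp
        have e1 : modK k ((i1 : ℤ) + 1) = 2 := by
          rw [v1]; unfold modK
          rw [show (1:ℤ) + 1 - 1 = 1 by ring,
            Int.emod_eq_of_lt (by omega) (by omega)]
          norm_num
        rw [e0, e1]
        ring
  refine ⟨hmain, ?_⟩
  intro s s' hs1 hsn hs'1 hs'n hne hset
  rw [hmain s hs1 hsn, hmain s' hs'1 hs'n] at hset
  have h1 : s' ∣ s := by
    have : s ∈ {x : ℤ | s ∣ x} := dvd_refl s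
    rw [hset] at this
    exact this
  have h2 : s ∣ s' := by
    have : s' ∈ {x : ℤ | s' ∣ x} := dvd_refl s'
    rw [← hset] at this
    exact this
  exact hne (Int.dvd_antisymm (by omega) (by omega) h2 h1)
end
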